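/- Let α₀ be a real number with 0 < α₀ < 1/4 and set β := 1 − 2α₀ and γ := 2 − 2α₀. Then the double series ∑ 1/(|m|^{γ+1} |p|^{γ} |m − p|^{β}), taken over all pairs of nonzero integers m, p with m ≠ p, converges and is at most 4 ζ(γ + 1) √(ζ(2γ) ζ(2β)). -/

import Mathlib

/-- `ζ(s) = ∑_{n≥1} n^{-s}` for real `s`. -/
noncomputable def zetaR (s : ℝ) : ℝ := ∑' n : ℕ, 1 / ((n : ℝ) + 1) ^ s

lemma zsum {s : ℝ} (hs : 1 < s) : Summable (fun n : ℕ => 1 / ((n : ℝ) + 1) ^ s) := by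
  have h := (Real.summable_one_div_nat_rpow (p := s)).mpr hs
  have := (summable_nat_add_iff 1).mpr h
  simpa using this

lemma zetaR_nonneg (s : ℝ) : 0 ≤ zetaR s :=
  tsum_nonneg fun n => by positivity

noncomputable def gfun (s : ℝ) : ℤ → ℝ := fun n => if n = 0 then 0 else 1 / |(n : ℝ)| ^ s

lemma gfun_nat (s : ℝ) (n : ℕ) : gfun s (n + 1 : ℕ) = 1 / ((n : ℝ) + 1) ^ s := by
  have h1 : ((n + 1 : ℕ) : ℤ) ≠ 0 := by exact_mod_cast Nat.succ_ne_zero n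
  simp only [gfun, if_neg h1]
  rw [abs_of_nonneg (by positivity)]
  push_cast; ring_nf

lemma gfun_neg (s : ℝ) (n : ℕ) : gfun s (-(n + 1 : ℕ)) = 1 / ((n : ℝ) + 1) ^ s := by
  simp only [gfun]
  rw [if_neg (by omega), Int.cast_neg, abs_neg, abs_of_nonneg (by positivity)]
  push_cast; ring_nf

lemma gsum_nat {s : ℝ} (hs : 1 < s) : Summable (fun n : ℕ => gfun s n) ∧
    ∑' n : ℕ, gfun s (n : ℤ) = zetaR s := by
  have h1 : Summable (fun n : ℕ => gfun s ((n + 1 : ℕ))) := by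
    simp_rw [gfun_nat]; exact zsum hs
  have h0 : Summable (fun n : ℕ => gfun s n) := (summable_nat_add_iff 1).mp h1
  refine ⟨h0, ?_⟩
  rw [Summable.tsum_eq_zero_add h0]
  simp only [gfun_nat]
  simp [gfun, zetaR]

lemma gsum_neg {s : ℝ} (hs : 1 < s) : Summable (fun n : ℕ => gfun s (-(n + 1))) ∧
    ∑' n : ℕ, gfun s (-(n + 1)) = zetaR s := by
  have : ∀ n : ℕ, gfun s (-(n+1)) = 1 / ((n : ℝ) + 1) ^ s := by
    intro n; have := gfun_neg s n; push_cast at this ⊢; exact this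
  simp_rw [this]
  exact ⟨zsum hs, rfl⟩

lemma gsum_int {s : ℝ} (hs : 1 < s) : Summable (gfun s) ∧ ∑' n : ℤ, gfun s n = 2 * zetaR s := by
  have h1 := gsum_nat hs
  have h2 := gsum_neg hs
  refine ⟨Summable.of_nat_of_neg_add_one h1.1 h2.1, ?_⟩
  rw [tsum_of_nat_of_neg_add_one h1.1 h2.1, h1.2, h2.2]; ring

lemma int_sub {s : ℝ} (hs : 1 < s) :
    Summable (fun n : {n : ℤ // n ≠ 0} => 1 / |(n : ℝ)| ^ s) ∧
    ∑' n : {n : ℤ // n ≠ 0}, 1 / |((n : ℤ) : ℝ)| ^ s = 2 * zetaR s := by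
  have hg := gsum_int hs
  have hind : ∀ n : {n : ℤ // n ≠ 0}, gfun s n = 1 / |((n : ℤ) : ℝ)| ^ s := by
    intro ⟨n, hn⟩; simp [gfun, hn]
  have hsub : Summable (fun n : {n : ℤ // n ≠ 0} => gfun s n) :=
    hg.1.subtype _
  constructor
  · exact hsub.congr hind
  · rw [← tsum_congr hind]
    have : ∑' n : {n : ℤ // n ≠ 0}, gfun s n = ∑' n : ℤ, gfun s n := by
      apply tsum_subtype_eq_of_support_subset
      intro n hn
      simp only [Function.mem_support, gfun] at hn
      intro h0
      exact hn (by simp [h0])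
    rw [this, hg.2]

lemma cs_tsum {ι : Type*} (f g : ι → ℝ) (hf : ∀ i, 0 ≤ f i) (hg : ∀ i, 0 ≤ g i)
    (Hf : Summable (fun i => f i ^ 2)) (Hg : Summable (fun i => g i ^ 2)) :
    Summable (fun i => f i * g i) ∧
    ∑' i, f i * g i ≤ Real.sqrt (∑' i, f i ^ 2) * Real.sqrt (∑' i, g i ^ 2) := by
  have hsum : Summable (fun i => f i * g i) := by
    apply Summable.of_nonneg_of_le (fun i => mul_nonneg (hf i) (hg i))
      (fun i => ?_) ((Hf.add Hg).div_const 2)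
    nlinarith [sq_nonneg (f i - g i)]
  refine ⟨hsum, Summable.tsum_le_of_sum_le hsum fun s => ?_⟩
  calc ∑ i ∈ s, f i * g i ≤ Real.sqrt (∑ i ∈ s, f i ^ 2) * Real.sqrt (∑ i ∈ s, g i ^ 2) :=
        Real.sum_mul_le_sqrt_mul_sqrt s f g
    _ ≤ Real.sqrt (∑' i, f i ^ 2) * Real.sqrt (∑' i, g i ^ 2) := by
        apply mul_le_mul (Real.sqrt_le_sqrt ?_) (Real.sqrt_le_sqrt ?_)
          (Real.sqrt_nonneg _) (Real.sqrt_nonneg _)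
        · exact Summable.sum_le_tsum s (fun i _ => by positivity) Hf
        · exact Summable.sum_le_tsum s (fun i _ => by positivity) Hg

lemma sq_inv_rpow {c : ℝ} (x : ℝ) : (1 / |x| ^ c) ^ 2 = 1 / |x| ^ (2 * c) := by
  rw [div_pow, one_pow, ← Real.rpow_natCast (|x| ^ c) 2, ← Real.rpow_mul (abs_nonneg x)]
  norm_num [mul_comm]

lemma inner_bound {c b : ℝ} (hc : 1 < 2 * c) (hb : 1 < 2 * b) (m : ℤ) :
    Summable (fun p : {p : ℤ // p ≠ 0 ∧ p ≠ m} =>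
      1 / |((p : ℤ) : ℝ)| ^ c * (1 / |((m : ℝ)) - ((p : ℤ) : ℝ)| ^ b)) ∧
    ∑' p : {p : ℤ // p ≠ 0 ∧ p ≠ m}, 1 / |((p : ℤ) : ℝ)| ^ c * (1 / |((m : ℝ)) - ((p : ℤ) : ℝ)| ^ b)
      ≤ 2 * Real.sqrt (zetaR (2 * c) * zetaR (2 * b)) := by
  set T := {p : ℤ // p ≠ 0 ∧ p ≠ m}
  set f : T → ℝ := fun p => 1 / |((p : ℤ) : ℝ)| ^ c with hf_def
  set g : T → ℝ := fun p => 1 / |((m : ℝ)) - ((p : ℤ) : ℝ)| ^ b with hg_def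
  have hfpos : ∀ p : T, 0 ≤ f p := fun p => by positivity
  have hgpos : ∀ p : T, 0 ≤ g p := fun p => by positivity
  have hZc := int_sub hc
  have hZb := int_sub hb
  have i1 : T → {n : ℤ // n ≠ 0} := fun p => ⟨p.1, p.2.1⟩
  have hi1 : Function.Injective (fun p : T => (⟨p.1, p.2.1⟩ : {n : ℤ // n ≠ 0})) := by
    intro p q h; exact Subtype.ext (by simpa using congrArg Subtype.val h)
  have hi2 : Function.Injective (fun p : T => (⟨m - p.1, sub_ne_zero.mpr (Ne.symm p.2.2)⟩ :
      {n : ℤ // n ≠ 0})) := by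
    intro p q h
    have := congrArg Subtype.val h
    simp only at this
    exact Subtype.ext (by omega)
  have hcomp1 : ((fun n : {n : ℤ // n ≠ 0} => 1 / |((n : ℤ) : ℝ)| ^ (2 * c)) ∘
      (fun p : T => (⟨p.1, p.2.1⟩ : {n : ℤ // n ≠ 0}))) = fun p : T => f p ^ 2 := by
    funext p; simp only [Function.comp_apply, hf_def]; rw [sq_inv_rpow]
  have hcomp2 : ((fun n : {n : ℤ // n ≠ 0} => 1 / |((n : ℤ) : ℝ)| ^ (2 * b)) ∘
      (fun p : T => (⟨m - p.1, sub_ne_zero.mpr (Ne.symm p.2.2)⟩ : {n : ℤ // n ≠ 0}))) =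
      fun p : T => g p ^ 2 := by
    funext p
    simp only [Function.comp_apply, hg_def]
    rw [← sq_inv_rpow]
    push_cast
    ring_nf
  have Hf : Summable (fun p : T => f p ^ 2) := by
    rw [← hcomp1]; exact hZc.1.comp_injective hi1
  have Hg : Summable (fun p : T => g p ^ 2) := by
    rw [← hcomp2]; exact hZb.1.comp_injective hi2
  have hFle : ∑' p : T, f p ^ 2 ≤ 2 * zetaR (2 * c) := by
    rw [← hZc.2]
    apply Summable.tsum_le_tsum_of_inj _ hi1 (fun n _ => by positivity)
      (fun p => le_of_eq (congrFun hcomp1 p).symm ) Hf hZc.1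
  have hGle : ∑' p : T, g p ^ 2 ≤ 2 * zetaR (2 * b) := by
    rw [← hZb.2]
    apply Summable.tsum_le_tsum_of_inj _ hi2 (fun n _ => by positivity)
      (fun p => le_of_eq (congrFun hcomp2 p).symm ) Hg hZb.1
  obtain ⟨hsum, hle⟩ := cs_tsum f g hfpos hgpos Hf Hg
  refine ⟨hsum, hle.trans ?_⟩
  have h1 : Real.sqrt (∑' p : T, f p ^ 2) * Real.sqrt (∑' p : T, g p ^ 2) ≤
      Real.sqrt (2 * zetaR (2 * c)) * Real.sqrt (2 * zetaR (2 * b)) :=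
    mul_le_mul (Real.sqrt_le_sqrt hFle) (Real.sqrt_le_sqrt hGle) (Real.sqrt_nonneg _)
      (Real.sqrt_nonneg _)
  refine h1.trans (le_of_eq ?_)
  rw [← Real.sqrt_mul (by have := zetaR_nonneg (2 * c); positivity), show 2 * zetaR (2 * c) * (2 * zetaR (2 * b)) =
    4 * (zetaR (2 * c) * zetaR (2 * b)) by ring, Real.sqrt_mul (by norm_num),
    show Real.sqrt 4 = 2 by rw [show (4 : ℝ) = 2 ^ 2 by norm_num, Real.sqrt_sq two_pos.le]]

noncomputable def Gfun (γ β : ℝ)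
    (x : Σ m : {m : ℤ // m ≠ 0}, {p : ℤ // p ≠ 0 ∧ p ≠ (m : ℤ)}) : ℝ :=
  1 / |((x.1 : ℤ) : ℝ)| ^ (γ + 1) *
    (1 / |((x.2 : ℤ) : ℝ)| ^ γ * (1 / |(((x.1 : ℤ) : ℝ)) - ((x.2 : ℤ) : ℝ)| ^ β))

lemma Gfun_fiber (γ β : ℝ) (m : {m : ℤ // m ≠ 0}) :
    (fun p : {p : ℤ // p ≠ 0 ∧ p ≠ (m : ℤ)} => Gfun γ β ⟨m, p⟩) =
    fun p : {p : ℤ // p ≠ 0 ∧ p ≠ (m : ℤ)} => 1 / |((m : ℤ) : ℝ)| ^ (γ + 1) *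
      (1 / |((p : ℤ) : ℝ)| ^ γ * (1 / |(((m : ℤ) : ℝ)) - ((p : ℤ) : ℝ)| ^ β)) := rfl

def sigEquiv : {q : ℤ × ℤ // q.1 ≠ 0 ∧ q.2 ≠ 0 ∧ q.1 ≠ q.2} ≃
    Σ m : {m : ℤ // m ≠ 0}, {p : ℤ // p ≠ 0 ∧ p ≠ (m : ℤ)} where
  toFun q := ⟨⟨q.1.1, q.2.1⟩, ⟨q.1.2, q.2.2.1, (q.2.2.2).symm⟩⟩
  invFun x := ⟨(x.1.1, x.2.1), x.1.2, x.2.2.1, (x.2.2.2).symm⟩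
  left_inv _ := rfl
  right_inv _ := rfl

/-- An `ℓ²` bound: for `0 < α₀ < 1/4`, `β = 1−2α₀`, `γ = 2−2α₀`,
`∑_{m≠p, m,p≠0} 1/(|m|^{γ+1}|p|^γ|m−p|^β) ≤ 4ζ(γ+1)√(ζ(2γ)ζ(2β))`. -/
theorem stmt12 (α₀ : ℝ) (h0 : 0 < α₀) (h1 : α₀ < 1 / 4) :
    Summable (fun q : {q : ℤ × ℤ // q.1 ≠ 0 ∧ q.2 ≠ 0 ∧ q.1 ≠ q.2} =>
        1 / (|(q.1.1 : ℝ)| ^ ((2 - 2 * α₀) + 1) * |(q.1.2 : ℝ)| ^ (2 - 2 * α₀) *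
            |(q.1.1 : ℝ) - (q.1.2 : ℝ)| ^ (1 - 2 * α₀))) ∧
      ∑' q : {q : ℤ × ℤ // q.1 ≠ 0 ∧ q.2 ≠ 0 ∧ q.1 ≠ q.2},
          1 / (|(q.1.1 : ℝ)| ^ ((2 - 2 * α₀) + 1) * |(q.1.2 : ℝ)| ^ (2 - 2 * α₀) *
              |(q.1.1 : ℝ) - (q.1.2 : ℝ)| ^ (1 - 2 * α₀))
        ≤ 4 * zetaR ((2 - 2 * α₀) + 1) *
            Real.sqrt (zetaR (2 * (2 - 2 * α₀)) * zetaR (2 * (1 - 2 * α₀))) := by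
  set γ : ℝ := 2 - 2 * α₀ with hγ
  set β : ℝ := 1 - 2 * α₀ with hβ
  have hγ2 : 1 < 2 * γ := by rw [hγ]; linarith
  have hβ2 : 1 < 2 * β := by rw [hβ]; linarith
  have hγ1 : 1 < γ + 1 := by rw [hγ]; linarith
  set C : ℝ := 2 * Real.sqrt (zetaR (2 * γ) * zetaR (2 * β)) with hC
  have hC0 : 0 ≤ C := by positivity
  set G : (Σ m : {m : ℤ // m ≠ 0}, {p : ℤ // p ≠ 0 ∧ p ≠ (m : ℤ)}) → ℝ := Gfun γ β with hG
  have hFG : ∀ q : {q : ℤ × ℤ // q.1 ≠ 0 ∧ q.2 ≠ 0 ∧ q.1 ≠ q.2},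
      1 / (|(q.1.1 : ℝ)| ^ (γ + 1) * |(q.1.2 : ℝ)| ^ γ * |(q.1.1 : ℝ) - (q.1.2 : ℝ)| ^ β) =
      G (sigEquiv q) := by
    intro q
    show _ = 1 / |(q.1.1 : ℝ)| ^ (γ + 1) *
      (1 / |(q.1.2 : ℝ)| ^ γ * (1 / |(q.1.1 : ℝ) - (q.1.2 : ℝ)| ^ β))
    rw [div_mul_div_comm, div_mul_div_comm, one_mul, one_mul, ← mul_assoc]
  have hfiber : ∀ m : {m : ℤ // m ≠ 0},
      Summable (fun p : {p : ℤ // p ≠ 0 ∧ p ≠ (m : ℤ)} => G ⟨m, p⟩) := by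
    intro m
    rw [hG, Gfun_fiber]
    exact ((inner_bound hγ2 hβ2 (m : ℤ)).1).mul_left _
  have hfbound : ∀ m : {m : ℤ // m ≠ 0},
      ∑' p : {p : ℤ // p ≠ 0 ∧ p ≠ (m : ℤ)}, G ⟨m, p⟩ ≤ 1 / |((m : ℤ) : ℝ)| ^ (γ + 1) * C := by
    intro m
    rw [hG, Gfun_fiber, tsum_mul_left]
    exact mul_le_mul_of_nonneg_left (inner_bound hγ2 hβ2 (m : ℤ)).2 (by positivity)
  have hmaj : Summable (fun m : {m : ℤ // m ≠ 0} => 1 / |((m : ℤ) : ℝ)| ^ (γ + 1) * C) :=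
    ((int_sub hγ1).1).mul_right C
  have hGsummand : ∀ x, 0 ≤ G x := fun x => by rw [hG]; unfold Gfun; positivity
  have HG : Summable G := by
    rw [summable_sigma_of_nonneg hGsummand]
    refine ⟨hfiber, Summable.of_nonneg_of_le (fun m => tsum_nonneg fun p => hGsummand _)
      hfbound hmaj⟩
  have HGm : Summable (fun m : {m : ℤ // m ≠ 0} =>
      ∑' p : {p : ℤ // p ≠ 0 ∧ p ≠ (m : ℤ)}, G ⟨m, p⟩) :=
    ((summable_sigma_of_nonneg hGsummand).mp HG).2
  have HF : Summable (fun q : {q : ℤ × ℤ // q.1 ≠ 0 ∧ q.2 ≠ 0 ∧ q.1 ≠ q.2} =>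
      1 / (|(q.1.1 : ℝ)| ^ (γ + 1) * |(q.1.2 : ℝ)| ^ γ * |(q.1.1 : ℝ) - (q.1.2 : ℝ)| ^ β)) := by
    refine Summable.congr ?_ (fun q => (hFG q).symm)
    exact HG.comp_injective sigEquiv.injective
  refine ⟨HF, ?_⟩
  calc ∑' q : {q : ℤ × ℤ // q.1 ≠ 0 ∧ q.2 ≠ 0 ∧ q.1 ≠ q.2},
        1 / (|(q.1.1 : ℝ)| ^ (γ + 1) * |(q.1.2 : ℝ)| ^ γ * |(q.1.1 : ℝ) - (q.1.2 : ℝ)| ^ β)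
      = ∑' x, G x := by rw [tsum_congr hFG]; exact sigEquiv.tsum_eq G
    _ = ∑' m : {m : ℤ // m ≠ 0}, ∑' p : {p : ℤ // p ≠ 0 ∧ p ≠ (m : ℤ)}, G ⟨m, p⟩ :=
        Summable.tsum_sigma HG
    _ ≤ ∑' m : {m : ℤ // m ≠ 0}, 1 / |((m : ℤ) : ℝ)| ^ (γ + 1) * C :=
        Summable.tsum_le_tsum hfbound HGm hmaj
    _ = (∑' m : {m : ℤ // m ≠ 0}, 1 / |((m : ℤ) : ℝ)| ^ (γ + 1)) * C := tsum_mul_right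
    _ = 2 * zetaR (γ + 1) * C := by rw [(int_sub hγ1).2]
    _ = 4 * zetaR (γ + 1) * Real.sqrt (zetaR (2 * γ) * zetaR (2 * β)) := by rw [hC]; ring
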